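/- For every integer n ≥ 2, the family F consisting of the maximal chain C♭ = {C_0, C_1, …, C_n} together with the singletons {2}, {3}, …, {n} is induced-2C2-saturated, and |F| = 2n. -/
import Mathlib

/-- `F ⊆ 𝒫([n])` contains an induced copy of the poset `2C₂`: four sets
`A ⊊ A'`, `B ⊊ B'`, with each of `A, A'` incomparable to each of `B, B'`. -/
def Contains2C2 {n : ℕ} (F : Finset (Finset (Fin n))) : Prop :=
  ∃ A A' B B' : Finset (Fin n), A ∈ F ∧ A' ∈ F ∧ B ∈ F ∧ B' ∈ F ∧
    A ⊂ A' ∧ B ⊂ B' ∧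
    ¬ A ⊆ B ∧ ¬ B ⊆ A ∧ ¬ A ⊆ B' ∧ ¬ B' ⊆ A ∧
    ¬ A' ⊆ B ∧ ¬ B ⊆ A' ∧ ¬ A' ⊆ B' ∧ ¬ B' ⊆ A'

/-- `F` is induced-`2C₂`-saturated: it is induced-`2C₂`-free, and adding any
missing set creates an induced copy of `2C₂`. -/
def Saturated2C2 {n : ℕ} (F : Finset (Finset (Fin n))) : Prop :=
  ¬ Contains2C2 F ∧ ∀ S : Finset (Fin n), S ∉ F → Contains2C2 (insert S F)

/-- The chain element `C_i = [i] = {1,…,i}` (0-indexed: `{x : Fin n | x < i}`). -/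
def chainC (n i : ℕ) : Finset (Fin n) := Finset.univ.filter (fun x => (x : ℕ) < i)

/-- The maximal chain `C♭ = {C_0, C_1, …, C_n}`. -/
def Cflat (n : ℕ) : Finset (Finset (Fin n)) := (Finset.range (n + 1)).image (chainC n)

/-- The shackle `S_i = [i-1] ∪ {i+1}` (1-indexed elements; 0-indexed:
`{x : Fin n | x + 1 < i or x = i}`), meaningful for `1 ≤ i ≤ n-1`. -/
def shackle (n i : ℕ) : Finset (Fin n) :=
  Finset.univ.filter (fun x => (x : ℕ) + 1 < i ∨ (x : ℕ) = i)

/-- Two sets are comparable if one contains the other. -/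
def Comp {n : ℕ} (A B : Finset (Fin n)) : Prop := A ⊆ B ∨ B ⊆ A

/-- Two sets are incomparable if neither contains the other. -/
def Incomp {n : ℕ} (A B : Finset (Fin n)) : Prop := ¬ A ⊆ B ∧ ¬ B ⊆ A

lemma mem_chainC {n i : ℕ} {x : Fin n} : x ∈ chainC n i ↔ (x : ℕ) < i := by
  simp [chainC]

lemma chainC_subset {n i j : ℕ} (h : i ≤ j) : chainC n i ⊆ chainC n j := by
  intro x hx
  rw [mem_chainC] at hx ⊢
  omega

lemma chainC_card {n i : ℕ} (h : i ≤ n) : (chainC n i).card = i := by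
  have he : chainC n i =
      (Finset.range i).attachFin (fun m hm => lt_of_lt_of_le (Finset.mem_range.1 hm) h) := by
    ext x
    simp [mem_chainC, Finset.mem_attachFin]
  rw [he, Finset.card_attachFin, Finset.card_range]

lemma chainC_mem_Cflat {n i : ℕ} (h : i ≤ n) : chainC n i ∈ Cflat n := by
  exact Finset.mem_image_of_mem _ (Finset.mem_range.2 (by omega))

/-- Classification of members of the family. -/
lemma classifyF {n : ℕ} {y : Finset (Fin n)}
    (hy : y ∈ Cflat n ∪
      (Finset.univ.filter (fun x : Fin n => 1 ≤ (x : ℕ))).image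
        (fun x => ({x} : Finset (Fin n)))) :
    (∃ i, i ≤ n ∧ y = chainC n i) ∨ (∃ x : Fin n, y = {x}) := by
  rcases Finset.mem_union.1 hy with h | h
  · obtain ⟨i, hi, rfl⟩ := Finset.mem_image.1 h
    exact Or.inl ⟨i, by have := Finset.mem_range.1 hi; omega, rfl⟩
  · obtain ⟨x, _, rfl⟩ := Finset.mem_image.1 h
    exact Or.inr ⟨x, rfl⟩

theorem chain_plus_singletons_saturated (n : ℕ) (hn : 2 ≤ n)
    (F : Finset (Finset (Fin n)))
    (hF : F = Cflat n ∪
      (Finset.univ.filter (fun x : Fin n => 1 ≤ (x : ℕ))).image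
        (fun x => ({x} : Finset (Fin n)))) :
    Saturated2C2 F ∧ F.card = 2 * n := by
  subst hF
  set Sing := (Finset.univ.filter (fun x : Fin n => 1 ≤ (x : ℕ))).image
      (fun x => ({x} : Finset (Fin n))) with hSing
  set F := Cflat n ∪ Sing with hFdef
  -- membership helpers
  have hsingF : ∀ x : Fin n, 1 ≤ (x : ℕ) → ({x} : Finset (Fin n)) ∈ F := by
    intro x hx
    apply Finset.mem_union_right
    exact Finset.mem_image_of_mem _ (Finset.mem_filter.2 ⟨Finset.mem_univ _, hx⟩)
  have hchainF : ∀ i : ℕ, i ≤ n → chainC n i ∈ F :=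
    fun i hi => Finset.mem_union_left _ (chainC_mem_Cflat hi)
  have hn0 : 0 < n := by omega
  set z0 : Fin n := ⟨0, hn0⟩ with hz0def
  have hz0 : (z0 : ℕ) = 0 := rfl
  constructor
  · constructor
    · -- freeness
      rintro ⟨A, A', B, B', hA, hA', hB, hB', hAA, hBB, h1, h2, h3, h4, h5, h6, h7, h8⟩
      have keyA' : ∃ i, i ≤ n ∧ A' = chainC n i := by
        rcases classifyF hA' with h | ⟨x, rfl⟩
        · exact h
        · have : A = ∅ := Finset.ssubset_singleton_iff.1 hAA
          exact absurd (this ▸ Finset.empty_subset B) h1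
      have keyB' : ∃ j, j ≤ n ∧ B' = chainC n j := by
        rcases classifyF hB' with h | ⟨x, rfl⟩
        · exact h
        · have : B = ∅ := Finset.ssubset_singleton_iff.1 hBB
          exact absurd (this ▸ Finset.empty_subset A) h2
      obtain ⟨i, _, rfl⟩ := keyA'
      obtain ⟨j, _, rfl⟩ := keyB'
      rcases le_total i j with h | h
      · exact h7 (chainC_subset h)
      · exact h8 (chainC_subset h)
    · -- saturation
      intro S hS
      -- S has at least two elements
      have hS2 : 2 ≤ S.card := by
        by_contra h
        apply hS
        have h01 : S.card = 0 ∨ S.card = 1 := by omega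
        rcases h01 with h0 | h1
        · have : S = chainC n 0 := by
            rw [Finset.card_eq_zero.1 h0]
            ext x; simp [mem_chainC]
          exact this ▸ hchainF 0 (by omega)
        · obtain ⟨x, rfl⟩ := Finset.card_eq_one.1 h1
          by_cases hx : 1 ≤ (x : ℕ)
          · exact hsingF x hx
          · have hx0 : (x : ℕ) = 0 := by omega
            have : ({x} : Finset (Fin n)) = chainC n 1 := by
              ext y
              simp only [Finset.mem_singleton, mem_chainC, Fin.ext_iff, hx0]
              omega
            exact this ▸ hchainF 1 (by omega)
      have hSmem : S ∈ insert S F := Finset.mem_insert_self _ _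
      have hFmem : ∀ y ∈ F, y ∈ insert S F := fun y hy => Finset.mem_insert_of_mem hy
      have hSnotsub : ∀ b : Fin n, b ∈ S → ¬ S ⊆ ({b} : Finset (Fin n)) := by
        intro b hb hsub
        have := Finset.card_le_card hsub
        simp at this
        omega
      by_cases hP : ∃ a b : Fin n, 1 ≤ (a : ℕ) ∧ (a : ℕ) < (b : ℕ) ∧ a ∉ S ∧ b ∈ S
      · -- construction 1
        obtain ⟨a, b, ha1, hab, haS, hbS⟩ := hP
        refine ⟨{b}, S, {a}, chainC n ((a : ℕ) + 1), hFmem _ (hsingF b (by omega)), hSmem,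
          hFmem _ (hsingF a ha1), hFmem _ (hchainF _ (by omega)), ?_, ?_, ?_, ?_, ?_, ?_, ?_, ?_, ?_, ?_⟩
        · exact ⟨Finset.singleton_subset_iff.2 hbS, hSnotsub b hbS⟩
        · constructor
          · exact Finset.singleton_subset_iff.2 (mem_chainC.2 (by omega))
          · intro hsub
            have := Finset.mem_singleton.1
              (hsub (mem_chainC.2 (show (z0 : ℕ) < (a:ℕ)+1 by rw [hz0]; omega)))
            rw [Fin.ext_iff, hz0] at this
            omega
        · intro h
          have := Finset.mem_singleton.1 (h (Finset.mem_singleton_self b))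
          rw [Fin.ext_iff] at this; omega
        · intro h
          have := Finset.mem_singleton.1 (h (Finset.mem_singleton_self a))
          rw [Fin.ext_iff] at this; omega
        · intro h
          have := mem_chainC.1 (h (Finset.mem_singleton_self b))
          omega
        · intro h
          have := Finset.mem_singleton.1
            (h (mem_chainC.2 (show (z0 : ℕ) < (a:ℕ)+1 by rw [hz0]; omega)))
          rw [Fin.ext_iff, hz0] at this
          omega
        · intro h
          have := Finset.mem_singleton.1 (h hbS)
          rw [Fin.ext_iff] at this; omega
        · exact fun h => haS (Finset.singleton_subset_iff.1 h)
        · intro h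
          have := mem_chainC.1 (h hbS)
          omega
        · intro h
          exact haS (h (mem_chainC.2 (by omega)))
      · -- no such pair: show 0 ∉ S and get b with (b:ℕ) ≥ 2
        push_neg at hP
        have hlow : ∀ b : Fin n, b ∈ S → ∀ a : Fin n, 1 ≤ (a : ℕ) → (a : ℕ) < (b : ℕ) → a ∈ S := by
          intro b hb a ha hab
          by_contra haS
          exact (hP a b ha hab haS) hb
        have h0S : z0 ∉ S := by
          intro h0
          apply hS
          -- S is a lower set, hence an initial segment
          have hlower : ∀ x y : Fin n, (x : ℕ) ≤ (y : ℕ) → y ∈ S → x ∈ S := by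
            intro x y hxy hy
            by_cases hx0 : (x : ℕ) = 0
            · have : x = z0 := by rw [Fin.ext_iff, hz0]; omega
              exact this ▸ h0
            · rcases eq_or_lt_of_le hxy with he | hlt
              · have : x = y := by rw [Fin.ext_iff]; omega
                exact this ▸ hy
              · exact hlow y hy x (by omega) hlt
          have hcard_le : S.card ≤ n := by
            have := Finset.card_le_card (Finset.subset_univ S)
            simpa using this
          have hsub : S ⊆ chainC n S.card := by
            intro x hx
            rw [mem_chainC]
            have hsub2 : chainC n ((x : ℕ) + 1) ⊆ S := by
              intro y hy
              exact hlower y x (by have := mem_chainC.1 hy; omega) hx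
            have := Finset.card_le_card hsub2
            rw [chainC_card (by omega)] at this
            omega
          have : S = chainC n S.card :=
            Finset.eq_of_subset_of_card_le hsub (le_of_eq (chainC_card hcard_le))
          exact this ▸ hchainF S.card hcard_le
        have hvalne0 : ∀ y ∈ S, 1 ≤ (y : ℕ) := by
          intro y hy
          by_contra h
          have : y = z0 := by rw [Fin.ext_iff, hz0]; omega
          exact h0S (this ▸ hy)
        obtain ⟨x, hx, y, hy, hxy⟩ := Finset.one_lt_card.1 (by omega : 1 < S.card)
        have hxyval : (x : ℕ) ≠ (y : ℕ) := fun h => hxy (Fin.ext h)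
        have hb : ∃ b : Fin n, b ∈ S ∧ 2 ≤ (b : ℕ) := by
          have hx1 := hvalne0 x hx
          have hy1 := hvalne0 y hy
          rcases lt_or_gt_of_ne hxyval with h | h
          · exact ⟨y, hy, by omega⟩
          · exact ⟨x, hx, by omega⟩
        obtain ⟨b, hbS, hb2⟩ := hb
        -- construction 2 : A = {b}, A' = S, B = chainC n 1, B' = chainC n 2
        refine ⟨{b}, S, chainC n 1, chainC n 2, hFmem _ (hsingF b (by omega)), hSmem,
          hFmem _ (hchainF 1 (by omega)), hFmem _ (hchainF 2 hn), ?_, ?_, ?_, ?_, ?_, ?_, ?_, ?_, ?_, ?_⟩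
        · exact ⟨Finset.singleton_subset_iff.2 hbS, hSnotsub b hbS⟩
        · constructor
          · exact chainC_subset (by omega)
          · intro h
            have h1n : (1 : ℕ) < n := by omega
            have := mem_chainC.1
              (h (mem_chainC.2 (show ((⟨1, h1n⟩ : Fin n) : ℕ) < 2 by norm_num)))
            norm_num at this
        · intro h
          have := mem_chainC.1 (h (Finset.mem_singleton_self b))
          omega
        · intro h
          have := Finset.mem_singleton.1
            (h (mem_chainC.2 (show (z0 : ℕ) < 1 by rw [hz0]; omega)))
          rw [Fin.ext_iff, hz0] at this
          omega
        · intro h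
          have := mem_chainC.1 (h (Finset.mem_singleton_self b))
          omega
        · intro h
          have := Finset.mem_singleton.1
            (h (mem_chainC.2 (show (z0 : ℕ) < 2 by rw [hz0]; omega)))
          rw [Fin.ext_iff, hz0] at this
          omega
        · intro h
          have := mem_chainC.1 (h hbS)
          omega
        · intro h
          exact h0S (h (mem_chainC.2 (show (z0 : ℕ) < 1 by rw [hz0]; omega)))
        · intro h
          have := mem_chainC.1 (h hbS)
          omega
        · intro h
          exact h0S (h (mem_chainC.2 (show (z0 : ℕ) < 2 by rw [hz0]; omega)))
  · -- cardinality
    have hdisj : Disjoint (Cflat n) Sing := by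
      rw [Finset.disjoint_left]
      rintro y hy hy'
      obtain ⟨i, hi, rfl⟩ := Finset.mem_image.1 hy
      obtain ⟨x, hx, hxe⟩ := Finset.mem_image.1 hy'
      have hx1 : 1 ≤ (x : ℕ) := (Finset.mem_filter.1 hx).2
      have hin : i ≤ n := by have := Finset.mem_range.1 hi; omega
      have hmem : (x : ℕ) < i := mem_chainC.1 (hxe ▸ Finset.mem_singleton_self x)
      have hcard : i = 1 := by
        have h1 := chainC_card (n := n) hin
        rw [← hxe] at h1
        simp at h1
        omega
      omega
    have hc1 : (Cflat n).card = n + 1 := by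
      rw [Cflat, Finset.card_image_of_injOn, Finset.card_range]
      intro i hi j hj hij
      simp only [Finset.coe_range, Set.mem_Iio] at hi hj
      have := chainC_card (n := n) (by omega : i ≤ n)
      rw [hij, chainC_card (by omega : j ≤ n)] at this
      omega
    have hc2 : Sing.card = n - 1 := by
      rw [hSing, Finset.card_image_of_injective _ Finset.singleton_injective]
      have he : (Finset.univ.filter (fun x : Fin n => 1 ≤ (x : ℕ))) = Finset.univ.erase z0 := by
        ext x
        simp only [Finset.mem_filter, Finset.mem_univ, true_and, Finset.mem_erase, and_true,
          ne_eq, Fin.ext_iff, hz0]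
        omega
      rw [he, Finset.card_erase_of_mem (Finset.mem_univ _)]
      simp
    rw [hFdef, Finset.card_union_of_disjoint hdisj, hc1, hc2]
    omega
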